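/- Let γ : [0, L] → ℝ² be a unit-speed curve with 1-Lipschitz unit tangent, let θ ∈ (0, L) and write L = mθ + δ with m = ⌊L/θ⌋ and 0 ≤ δ < θ. Define the θ-discretization P of γ with vertices γ(tᵢ) where t₀ = 0, tₖ = L, consecutive parameter gaps equal θ except possibly the first and last gap which equal δ/2 (when δ > 0). Then every edge of P corresponding to a parameter gap of θ has length at least ℓ = 2·sin(θ/2), and consequently no two consecutive edges of P both have length < ℓ. -/

import Mathlib

open Real


-- Lipschitz continuity of γ' on [0,L]
lemma gp_cont {L : ℝ} {γ' : ℝ → EuclideanSpace ℝ (Fin 2)}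
    (hunit : ∀ t ∈ Set.Icc (0:ℝ) L, ‖γ' t‖ = 1)
    (hlip : ∀ t s : ℝ, t ∈ Set.Icc (0:ℝ) L → s ∈ Set.Icc (0:ℝ) L → t ≤ s → s - t ≤ π →
      Real.cos (s - t) ≤ (inner ℝ (γ' s) (γ' t) : ℝ)) :
    ContinuousOn γ' (Set.Icc 0 L) := by
  have key : ∀ a ∈ Set.Icc (0:ℝ) L, ∀ b ∈ Set.Icc (0:ℝ) L, a ≤ b →
      dist (γ' a) (γ' b) ≤ dist a b := by
    intro a ha b hb hab
    by_cases hπ : b - a ≤ π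
    · have h1 := hlip a b ha hb hab hπ
      have h2 : ‖γ' b - γ' a‖^2 = 2 - 2 * (inner ℝ (γ' b) (γ' a) : ℝ) := by
        rw [norm_sub_sq_real, hunit a ha, hunit b hb]; ring
      have h3 : ‖γ' b - γ' a‖^2 ≤ (b - a)^2 := by
        rw [h2]
        have := Real.one_sub_sq_div_two_le_cos (x := b - a)
        nlinarith
      have : ‖γ' b - γ' a‖ ≤ b - a := by
        nlinarith [h3, norm_nonneg (γ' b - γ' a)]
      rw [dist_eq_norm, dist_eq_norm]
      calc ‖γ' a - γ' b‖ = ‖γ' b - γ' a‖ := by rw [norm_sub_rev]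
        _ ≤ b - a := this
        _ = |a - b| := by rw [abs_sub_comm, abs_of_nonneg (by linarith)]
    · have h2 : dist (γ' a) (γ' b) ≤ 2 := by
        have := dist_le_norm_add_norm (γ' a) (γ' b)
        rw [hunit a ha, hunit b hb] at this; linarith
      have h3 : (2:ℝ) ≤ dist a b := by
        rw [Real.dist_eq, abs_sub_comm, abs_of_nonneg (by linarith)]
        nlinarith [Real.pi_gt_three]
      linarith
  have : LipschitzOnWith 1 γ' (Set.Icc 0 L) := by
    apply LipschitzOnWith.of_dist_le_mul
    intro x hx y hy
    rcases le_total x y with h | h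
    · simpa using key x hx y hy h
    · rw [dist_comm, dist_comm x y]; simpa using key y hy x hx h
  exact this.continuousOn

-- Chord bound
lemma chord {L : ℝ} {γ γ' : ℝ → EuclideanSpace ℝ (Fin 2)}
    (hderiv : ∀ t ∈ Set.Icc (0:ℝ) L, HasDerivAt γ (γ' t) t)
    (hunit : ∀ t ∈ Set.Icc (0:ℝ) L, ‖γ' t‖ = 1)
    (hlip : ∀ t s : ℝ, t ∈ Set.Icc (0:ℝ) L → s ∈ Set.Icc (0:ℝ) L → t ≤ s → s - t ≤ π →
      Real.cos (s - t) ≤ (inner ℝ (γ' s) (γ' t) : ℝ))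
    {a b : ℝ} (ha : a ∈ Set.Icc (0:ℝ) L) (hb : b ∈ Set.Icc (0:ℝ) L)
    (hab : a ≤ b) (hπ : b - a ≤ π) :
    2 * Real.sin ((b - a) / 2) ≤ dist (γ a) (γ b) := by
  set m := (a + b) / 2 with hm
  have hma : a ≤ m := by rw [hm]; linarith
  have hmb : m ≤ b := by rw [hm]; linarith
  have hmIcc : m ∈ Set.Icc (0:ℝ) L := ⟨le_trans ha.1 hma, le_trans hmb hb.2⟩
  set v := γ' m with hv
  have hsub : Set.Icc a b ⊆ Set.Icc (0:ℝ) L := Set.Icc_subset_Icc ha.1 hb.2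
  have hcont : ContinuousOn γ' (Set.Icc 0 L) := gp_cont hunit hlip
  -- f u = ⟪γ u, v⟫
  have hf : ∀ u ∈ Set.uIcc a b, HasDerivAt (fun u => (inner ℝ (γ u) v : ℝ))
      (inner ℝ (γ' u) v : ℝ) u := by
    intro u hu
    rw [Set.uIcc_of_le hab] at hu
    have h1 := (hderiv u (hsub hu)).inner ℝ (hasDerivAt_const u v)
    simpa using h1
  have hint : IntervalIntegrable (fun u => (inner ℝ (γ' u) v : ℝ)) MeasureTheory.volume a b := by
    apply ContinuousOn.intervalIntegrable
    rw [Set.uIcc_of_le hab]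
    exact ((hcont.mono hsub).inner continuousOn_const)
  have hftc : ∫ u in a..b, (inner ℝ (γ' u) v : ℝ) =
      (inner ℝ (γ b) v : ℝ) - (inner ℝ (γ a) v : ℝ) :=
    intervalIntegral.integral_eq_sub_of_hasDerivAt hf hint
  have hcosint : IntervalIntegrable (fun u => Real.cos (u - m)) MeasureTheory.volume a b :=
    (Real.continuous_cos.comp (continuous_id.sub continuous_const)).intervalIntegrable a b
  have hmono : ∫ u in a..b, Real.cos (u - m) ≤ ∫ u in a..b, (inner ℝ (γ' u) v : ℝ) := by
    apply intervalIntegral.integral_mono_on hab hcosint hint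
    intro u hu
    have huIcc : u ∈ Set.Icc (0:ℝ) L := hsub hu
    rcases le_total u m with h | h
    · have hd : m - u ≤ π := by
        obtain ⟨h1, h2⟩ := hu
        have : m - u ≤ (b - a) / 2 := by rw [hm]; linarith
        linarith
      have := hlip u m huIcc hmIcc h hd
      calc Real.cos (u - m) = Real.cos (m - u) := by rw [← Real.cos_neg]; ring_nf
        _ ≤ (inner ℝ (γ' m) (γ' u) : ℝ) := this
        _ = (inner ℝ (γ' u) v : ℝ) := real_inner_comm _ _
    · have hd : u - m ≤ π := by
        obtain ⟨h1, h2⟩ := hu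
        have : u - m ≤ (b - a) / 2 := by rw [hm]; linarith
        linarith
      exact hlip m u hmIcc huIcc h hd
  have hcosval : ∫ u in a..b, Real.cos (u - m) = 2 * Real.sin ((b - a) / 2) := by
    rw [intervalIntegral.integral_comp_sub_right (fun x => Real.cos x) m,
      integral_cos]
    have h1 : b - m = (b - a) / 2 := by rw [hm]; ring
    have h2 : a - m = -((b - a) / 2) := by rw [hm]; ring
    rw [h1, h2, Real.sin_neg]; ring
  have hcs : (inner ℝ (γ b - γ a) v : ℝ) ≤ dist (γ a) (γ b) := by
    calc (inner ℝ (γ b - γ a) v : ℝ) ≤ ‖γ b - γ a‖ * ‖v‖ := real_inner_le_norm _ _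
      _ = dist (γ a) (γ b) := by rw [hv, hunit m hmIcc, mul_one, dist_eq_norm, norm_sub_rev]
  have : (inner ℝ (γ b) v : ℝ) - (inner ℝ (γ a) v : ℝ) = (inner ℝ (γ b - γ a) v : ℝ) := by
    rw [inner_sub_left]
  rw [hcosval, hftc, this] at hmono
  linarith

/-- In the `θ`-discretization of a unit-speed curve with 1-Lipschitz unit tangent,
every edge corresponding to a parameter gap of `θ` has length at least `ℓ = 2 sin (θ/2)`,
and consequently no two consecutive edges are both shorter than `ℓ`. -/
theorem discretization_edge_lengths
    (L θ : ℝ) (γ γ' : ℝ → EuclideanSpace ℝ (Fin 2))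
    (hderiv : ∀ t ∈ Set.Icc (0:ℝ) L, HasDerivAt γ (γ' t) t)
    (hunit : ∀ t ∈ Set.Icc (0:ℝ) L, ‖γ' t‖ = 1)
    (hlip : ∀ t s : ℝ, t ∈ Set.Icc (0:ℝ) L → s ∈ Set.Icc (0:ℝ) L → t ≤ s → s - t ≤ π →
      Real.cos (s - t) ≤ (inner ℝ (γ' s) (γ' t) : ℝ))
    (hθ0 : 0 < θ) (hθL : θ < L) (hθπ : θ < π)
    (k : ℕ) (t : ℕ → ℝ)
    (ht0 : t 0 = 0) (htk : t k = L)
    (hrange : ∀ i ≤ k, t i ∈ Set.Icc (0:ℝ) L)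
    (hgap : ∀ i < k, t (i+1) - t i = θ ∨
      ((i = 0 ∨ i = k - 1) ∧ t (i+1) - t i = (L - (⌊L / θ⌋ : ℝ) * θ) / 2)) :
    (∀ i < k, t (i+1) - t i = θ →
      2 * Real.sin (θ / 2) ≤ dist (γ (t i)) (γ (t (i+1)))) ∧
    (∀ i : ℕ, i + 1 < k →
      ¬ (dist (γ (t i)) (γ (t (i+1))) < 2 * Real.sin (θ / 2) ∧
         dist (γ (t (i+1))) (γ (t (i+2))) < 2 * Real.sin (θ / 2))) := by
  have part1 : ∀ i < k, t (i+1) - t i = θ →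
      2 * Real.sin (θ / 2) ≤ dist (γ (t i)) (γ (t (i+1))) := by
    intro i hi hg
    have ha := hrange i (le_of_lt hi)
    have hb := hrange (i+1) hi
    have hab : t i ≤ t (i+1) := by linarith [hg, hθ0]
    have h := chord hderiv hunit hlip ha hb hab (by rw [hg]; linarith)
    rwa [hg] at h
  refine ⟨part1, ?_⟩
  intro i hi ⟨h1, h2⟩
  have hik : i < k := Nat.lt_of_succ_lt hi
  set δ := L - (⌊L / θ⌋ : ℝ) * θ with hδ
  clear_value δ
  have hδθ : δ < θ := by
    have := Int.sub_one_lt_floor (L / θ)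
    have h' : L / θ - 1 < (⌊L / θ⌋ : ℝ) := this
    have h2 : (L / θ) * θ = L := div_mul_cancel₀ L (ne_of_gt hθ0)
    have h3 := mul_lt_mul_of_pos_right h' hθ0
    rw [hδ]; nlinarith
  -- edge i must be a δ/2 edge with i = 0
  have e1 : t (i+1) - t i = δ / 2 ∧ i = 0 := by
    rcases hgap i hik with h | ⟨hc, he⟩
    · exact absurd (part1 i hik h) (not_le.mpr h1)
    · refine ⟨he, ?_⟩
      rcases hc with h0 | hk1
      · exact h0
      · exfalso
        have hk2 : 2 ≤ k := by omega
        omega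
  -- edge i+1 must be a δ/2 edge with i+1 = k-1
  have e2 : t (i+2) - t (i+1) = δ / 2 ∧ i + 1 = k - 1 := by
    rcases hgap (i+1) hi with h | ⟨hc, he⟩
    · exact absurd (part1 (i+1) hi h) (not_le.mpr h2)
    · refine ⟨he, ?_⟩
      rcases hc with h0 | hk1
      · omega
      · exact hk1
  have hi0 : i = 0 := e1.2
  have hk2 : k = 2 := by omega
  subst hi0 hk2
  have hL : t 2 = L := htk
  have hA := e1.1
  have hB := e2.1
  norm_num at hA hB
  rw [ht0, sub_zero] at hA
  have hsum : L = δ := by rw [← hL]; linarith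
  linarith [hδθ, hθL, hsum]
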